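/- For the system ṙ = αr + βr²cos3θ, θ̇ = -βr sin3θ with α,β>0, along any trajectory the function r sin^{1/3}(3θ) + (α/β) S(θ) is constant, where S(θ) = ∫₀^θ sin^{-2/3}(3s) ds, for trajectories staying in the sector 0 < θ < π/3. -/

import Mathlib

open Real MeasureTheory Set

private lemma sinpow_measurable :
    Measurable (fun s : ℝ => Real.sin (3 * s) ^ (-(2 : ℝ) / 3)) :=
  (Real.measurable_sin.comp (measurable_const.mul measurable_id)).pow measurable_const

private lemma sin_lower {b s : ℝ} (hb : 0 < b) (hbπ : 3 * b ≤ π) (hs : s ∈ Set.Ioc 0 b) :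
    s / b * Real.sin (3 * b) ≤ Real.sin (3 * s) := by
  have hconc := strictConcaveOn_sin_Icc.concaveOn
  have h0 : (0 : ℝ) ∈ Set.Icc 0 π := ⟨le_rfl, Real.pi_pos.le⟩
  have hL : 3 * b ∈ Set.Icc 0 π := ⟨by linarith, hbπ⟩
  have ha : (0:ℝ) ≤ 1 - s / b := by
    have : s / b ≤ 1 := (div_le_one hb).2 hs.2
    linarith
  have hb' : (0:ℝ) ≤ s / b := div_nonneg hs.1.le hb.le
  have := hconc.2 h0 hL ha hb' (by ring)
  simp only [smul_eq_mul, mul_zero, Real.sin_zero, zero_add] at this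
  have hx : s / b * (3 * b) = 3 * s := by field_simp
  rw [hx] at this
  linarith

private lemma f_integrable {b : ℝ} (hb : b ∈ Set.Ioo 0 (π / 3)) :
    IntervalIntegrable (fun s : ℝ => Real.sin (3 * s) ^ (-(2 : ℝ) / 3)) volume 0 b := by
  have hbπ : 3 * b < π := by have := hb.2; linarith
  have hsb : 0 < Real.sin (3 * b) :=
    Real.sin_pos_of_pos_of_lt_pi (by linarith [hb.1]) hbπ
  have hC : 0 < Real.sin (3 * b) / b := div_pos hsb hb.1
  have hg : IntervalIntegrable
      (fun s : ℝ => (Real.sin (3 * b) / b) ^ (-(2 : ℝ) / 3) * s ^ (-(2 : ℝ) / 3)) volume 0 b :=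
    (intervalIntegral.intervalIntegrable_rpow' (by norm_num)).const_mul _
  refine hg.mono_fun sinpow_measurable.aestronglyMeasurable ?_
  have huIoc : Set.uIoc (0:ℝ) b = Set.Ioc 0 b := Set.uIoc_of_le hb.1.le
  rw [huIoc]
  refine (ae_restrict_iff' measurableSet_Ioc).2 (Filter.Eventually.of_forall ?_)
  intro s hs
  have hkey : Real.sin (3 * b) / b * s ≤ Real.sin (3 * s) := by
    have := sin_lower hb.1 hbπ.le hs
    calc Real.sin (3 * b) / b * s = s / b * Real.sin (3 * b) := by ring
      _ ≤ Real.sin (3 * s) := this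
  have hpos : 0 < Real.sin (3 * b) / b * s := mul_pos hC hs.1
  have h1 : Real.sin (3 * s) ^ (-(2 : ℝ) / 3) ≤ (Real.sin (3 * b) / b * s) ^ (-(2 : ℝ) / 3) :=
    Real.rpow_le_rpow_of_nonpos hpos hkey (by norm_num)
  have h2 : (Real.sin (3 * b) / b * s) ^ (-(2 : ℝ) / 3)
      = (Real.sin (3 * b) / b) ^ (-(2 : ℝ) / 3) * s ^ (-(2 : ℝ) / 3) :=
    Real.mul_rpow hC.le hs.1.le
  simp only [Real.norm_eq_abs]
  rw [abs_of_nonneg (Real.rpow_nonneg (Real.sin_nonneg_of_nonneg_of_le_pi (by linarith [hs.1.le]) (by nlinarith [hs.2, hb.1])) _),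
    abs_of_nonneg (mul_nonneg (Real.rpow_nonneg hC.le _) (Real.rpow_nonneg hs.1.le _))]
  rw [← h2]; exact h1

private lemma g_hasDeriv {b : ℝ} (hb : b ∈ Set.Ioo 0 (π / 3)) :
    HasDerivAt (fun x : ℝ => ∫ s in (0:ℝ)..x, Real.sin (3 * s) ^ (-(2 : ℝ) / 3))
      (Real.sin (3 * b) ^ (-(2 : ℝ) / 3)) b := by
  refine intervalIntegral.integral_hasDerivAt_right (f_integrable hb)
    sinpow_measurable.stronglyMeasurable.stronglyMeasurableAtFilter ?_
  have hsb : Real.sin (3 * b) ≠ 0 := by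
    have : 0 < Real.sin (3 * b) :=
      Real.sin_pos_of_pos_of_lt_pi (by linarith [hb.1]) (by linarith [hb.2])
    exact this.ne'
  exact ((Real.continuous_sin.comp (continuous_const.mul continuous_id)).continuousAt).rpow_const
    (Or.inl hsb)

/-- For ṙ = αr + βr²cos3θ, θ̇ = -βr sin3θ with α,β>0, along any trajectory staying
in the sector 0 < θ < π/3, the function r sin^{1/3}(3θ) + (α/β) S(θ) is constant,
where S(θ) = ∫₀^θ sin^{-2/3}(3s) ds. -/
theorem stmt1 (α β : ℝ) (hα : 0 < α) (hβ : 0 < β) (r θ : ℝ → ℝ)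
    (hsector : ∀ t, θ t ∈ Set.Ioo 0 (Real.pi / 3))
    (hr : ∀ t, HasDerivAt r (α * r t + β * (r t) ^ 2 * Real.cos (3 * θ t)) t)
    (hθ : ∀ t, HasDerivAt θ (-(β * r t * Real.sin (3 * θ t))) t) :
    ∀ t₁ t₂ : ℝ,
      r t₁ * (Real.sin (3 * θ t₁)) ^ ((1 : ℝ) / 3)
        + (α / β) * ∫ s in (0 : ℝ)..(θ t₁), (Real.sin (3 * s)) ^ (-(2 : ℝ) / 3)
      = r t₂ * (Real.sin (3 * θ t₂)) ^ ((1 : ℝ) / 3)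
        + (α / β) * ∫ s in (0 : ℝ)..(θ t₂), (Real.sin (3 * s)) ^ (-(2 : ℝ) / 3) := by
  set F : ℝ → ℝ := fun t =>
    r t * (Real.sin (3 * θ t)) ^ ((1 : ℝ) / 3)
      + (α / β) * ∫ s in (0 : ℝ)..(θ t), (Real.sin (3 * s)) ^ (-(2 : ℝ) / 3) with hF
  have hFd : ∀ t, HasDerivAt F 0 t := by
    intro t
    have hsu : 0 < Real.sin (3 * θ t) :=
      Real.sin_pos_of_pos_of_lt_pi (by linarith [(hsector t).1]) (by linarith [(hsector t).2])
    have hsin : HasDerivAt (fun t => Real.sin (3 * θ t))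
        (Real.cos (3 * θ t) * (3 * -(β * r t * Real.sin (3 * θ t)))) t :=
      by have := (Real.hasDerivAt_sin (3 * θ t)).comp t ((hθ t).const_mul 3); exact this
    have hpow : HasDerivAt (fun t => Real.sin (3 * θ t) ^ ((1 : ℝ) / 3))
        ((Real.cos (3 * θ t) * (3 * -(β * r t * Real.sin (3 * θ t)))) * ((1:ℝ)/3)
          * Real.sin (3 * θ t) ^ ((1 : ℝ) / 3 - 1)) t :=
      hsin.rpow_const (Or.inl hsu.ne')
    have hprod := (hr t).mul hpow
    have hgc : HasDerivAt (fun t => (α / β) *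
        ∫ s in (0 : ℝ)..(θ t), (Real.sin (3 * s)) ^ (-(2 : ℝ) / 3))
        ((α / β) * (Real.sin (3 * θ t) ^ (-(2 : ℝ) / 3) * -(β * r t * Real.sin (3 * θ t)))) t :=
      (((g_hasDeriv (hsector t)).comp t (hθ t))).const_mul (α / β)
    have hsum := hprod.add hgc
    have hkey : Real.sin (3 * θ t) * Real.sin (3 * θ t) ^ (-(2 : ℝ) / 3)
        = Real.sin (3 * θ t) ^ ((1 : ℝ) / 3) := by
      nth_rewrite 1 [← Real.rpow_one (Real.sin (3 * θ t))]
      rw [← Real.rpow_add hsu]; norm_num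
    have hexp : Real.sin (3 * θ t) ^ ((1 : ℝ) / 3 - 1)
        = Real.sin (3 * θ t) ^ (-(2 : ℝ) / 3) := by norm_num
    have hzero :
        (α * r t + β * (r t) ^ 2 * Real.cos (3 * θ t)) * Real.sin (3 * θ t) ^ ((1 : ℝ) / 3)
          + r t * ((Real.cos (3 * θ t) * (3 * -(β * r t * Real.sin (3 * θ t)))) * ((1:ℝ)/3)
            * Real.sin (3 * θ t) ^ ((1 : ℝ) / 3 - 1))
          + (α / β) * (Real.sin (3 * θ t) ^ (-(2 : ℝ) / 3)
            * -(β * r t * Real.sin (3 * θ t))) = 0 := by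
      have hαβ : α / β * β = α := div_mul_cancel₀ α hβ.ne'
      rw [hexp]
      linear_combination (-(β * r t ^ 2 * Real.cos (3 * θ t)) - α / β * β * r t) * hkey
        + (-(r t * Real.sin (3 * θ t) ^ ((1:ℝ) / 3))) * hαβ
    rw [hF]
    exact hzero ▸ hsum
  intro t₁ t₂
  exact is_const_of_deriv_eq_zero (fun t => (hFd t).differentiableAt)
    (fun t => (hFd t).deriv) t₁ t₂
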